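/- For a pmf P on a finite set X and \rho > 0, with \alpha = 1/(1+\rho), the Rényi entropy satisfies the variational identity: \rho H_\alpha(P) = \sup over pmfs Q on X with Q \ll P of { \rho H(Q) - D(Q \| P) }, where H is Shannon entropy and D is relative entropy (all in nats). -/

import Mathlib

/-- Variational characterization of Rényi entropy: for a pmf `P` on a finite set and
`α = 1/(1+ρ)`, `ρ H_α(P) = sup_{Q ≪ P} { ρ H(Q) - D(Q‖P) }` (in nats). -/
theorem renyi_variational {α : Type*} [Fintype α] [Nonempty α]
    (P : α → ℝ) (hP0 : ∀ x, 0 ≤ P x) (hP1 : ∑ x, P x = 1)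
    (ρ : ℝ) (hρ : 0 < ρ) :
    ρ * ((1 - 1 / (1 + ρ))⁻¹ * Real.log (∑ x, P x ^ ((1 : ℝ) / (1 + ρ)))) =
      sSup {r : ℝ | ∃ Q : α → ℝ, (∀ x, 0 ≤ Q x) ∧ (∑ x, Q x = 1) ∧
        (∀ x, P x = 0 → Q x = 0) ∧
        r = ρ * (-∑ x, Q x * Real.log (Q x)) - ∑ x, Q x * Real.log (Q x / P x)} := by
  have h1ρ : (0:ℝ) < 1 + ρ := by linarith
  set a : ℝ := (1:ℝ)/(1+ρ) with ha
  have hapos : 0 < a := by positivity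
  have hid : (1+ρ) * a = 1 := by field_simp [ha]; rw [ha, mul_one_div_cancel h1ρ.ne']
  set S : ℝ := ∑ x, P x ^ a with hS
  have hSpos : 0 < S := by
    have hex : ∃ x, 0 < P x := by
      by_contra h
      push_neg at h
      have h0 : ∑ x, P x = 0 :=
        Finset.sum_eq_zero (fun x _ => le_antisymm (h x) (hP0 x))
      rw [h0] at hP1; norm_num at hP1
    obtain ⟨x, hx⟩ := hex
    calc (0:ℝ) < P x ^ a := Real.rpow_pos_of_pos hx a
      _ ≤ S := Finset.single_le_sum
          (fun i _ => Real.rpow_nonneg (hP0 i) a) (Finset.mem_univ x)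
  have hLHS : ρ * ((1 - a)⁻¹ * Real.log S) = (1+ρ) * Real.log S := by
    have h1a : (1 - a) = ρ/(1+ρ) := by field_simp [ha]; linear_combination -hid
    rw [h1a]
    field_simp
  rw [hLHS]
  -- the expand lemma
  have expand : ∀ f g : α → ℝ,
      ρ * (-∑ x, f x) - ∑ x, g x = ∑ x, (ρ * (-(f x)) - g x) := by
    intro f g
    rw [Finset.sum_sub_distrib]
    simp [Finset.mul_sum, mul_neg]
  -- the maximizer
  set Qs : α → ℝ := fun x => P x ^ a / S with hQs
  have hQs0 : ∀ x, 0 ≤ Qs x := fun x => by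
    have := Real.rpow_nonneg (hP0 x) a; positivity
  have hQsum : ∑ x, Qs x = 1 := by
    rw [hQs, ← Finset.sum_div, ← hS, div_self hSpos.ne']
  have hQsac : ∀ x, P x = 0 → Qs x = 0 := by
    intro x hx
    simp [hQs, hx, Real.zero_rpow hapos.ne']
  have hGreatest : IsGreatest {r : ℝ | ∃ Q : α → ℝ, (∀ x, 0 ≤ Q x) ∧ (∑ x, Q x = 1) ∧
        (∀ x, P x = 0 → Q x = 0) ∧
        r = ρ * (-∑ x, Q x * Real.log (Q x)) - ∑ x, Q x * Real.log (Q x / P x)}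
      ((1+ρ) * Real.log S) := by
    constructor
    · -- membership: attained at Qs
      refine ⟨Qs, hQs0, hQsum, hQsac, ?_⟩
      rw [expand]
      have hpt : ∀ x ∈ Finset.univ,
          ρ * (-(Qs x * Real.log (Qs x))) - Qs x * Real.log (Qs x / P x)
            = Qs x * ((1+ρ) * Real.log S) := by
        intro x _
        rcases eq_or_lt_of_le (hP0 x) with h0 | hPx
        · rw [hQsac x h0.symm]; ring
        · have hQx : 0 < Qs x := by
            have := Real.rpow_pos_of_pos hPx a; rw [hQs]; positivity
          have hlQ : Real.log (Qs x) = a * Real.log (P x) - Real.log S := by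
            rw [hQs]
            simp only
            rw [Real.log_div (by positivity) hSpos.ne', Real.log_rpow hPx]
          have hlQP : Real.log (Qs x / P x) = Real.log (Qs x) - Real.log (P x) :=
            Real.log_div hQx.ne' hPx.ne'
          rw [hlQP, hlQ]
          linear_combination (-(Qs x * Real.log (P x))) * hid
      rw [Finset.sum_congr rfl hpt, ← Finset.sum_mul, hQsum, one_mul]
    · -- upper bound
      rintro r ⟨Q, hQ0, hQ1, hQac, rfl⟩
      rw [expand]
      have hub : ∀ x ∈ Finset.univ,
          ρ * (-(Q x * Real.log (Q x))) - Q x * Real.log (Q x / P x)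
            ≤ (1+ρ) * (Q x * Real.log S) + (1+ρ) * (P x ^ a / S - Q x) := by
        intro x _
        rcases eq_or_lt_of_le (hQ0 x) with h0 | hQx
        · rw [← h0]
          simp only [zero_mul, mul_zero, neg_zero, sub_zero, sub_zero]
          have : 0 ≤ P x ^ a / S := by
            have := Real.rpow_nonneg (hP0 x) a; positivity
          nlinarith
        · have hPx : 0 < P x := by
            rcases eq_or_lt_of_le (hP0 x) with h | h
            · exact absurd (hQac x h.symm) hQx.ne'
            · exact h
          set t : ℝ := P x ^ a / (S * Q x) with hts
          have htpos : 0 < t := by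
            have := Real.rpow_pos_of_pos hPx a; rw [hts]; positivity
          have hlogt : Real.log t = a * Real.log (P x) - Real.log S - Real.log (Q x) := by
            rw [hts, Real.log_div (by positivity) (by positivity),
              Real.log_mul hSpos.ne' hQx.ne', Real.log_rpow hPx]
            ring
          have htQ : t * Q x = P x ^ a / S := by
            rw [hts]; field_simp
          have key := mul_le_mul_of_nonneg_left (Real.log_le_sub_one_of_pos htpos)
            (show (0:ℝ) ≤ (1+ρ) * Q x by positivity)
          rw [hlogt] at key
          rw [Real.log_div hQx.ne' hPx.ne']
          have h3 : (1+ρ) * Q x * (a * Real.log (P x)) = Q x * Real.log (P x) := by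
            rw [ha]; field_simp
          have h4 : (1+ρ) * Q x * t = (1+ρ) * (P x ^ a / S) := by
            rw [mul_assoc, mul_comm (Q x) t, htQ]
          nlinarith [key, h3, h4]
      calc ∑ x, (ρ * (-(Q x * Real.log (Q x))) - Q x * Real.log (Q x / P x))
          ≤ ∑ x, ((1+ρ) * (Q x * Real.log S) + (1+ρ) * (P x ^ a / S - Q x)) :=
            Finset.sum_le_sum hub
        _ = (1+ρ) * Real.log S := by
            rw [Finset.sum_add_distrib, ← Finset.mul_sum, ← Finset.mul_sum,
              ← Finset.sum_mul, hQ1, Finset.sum_sub_distrib, ← Finset.sum_div,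
              ← hS, div_self hSpos.ne', hQ1]
            ring
  exact hGreatest.csSup_eq.symm
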